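/- Let K ≥ 2, D := K − 1, and let m^(1), …, m^(K) be points in ℝ^D with minimum pairwise Euclidean distance δ := min_{k≠ℓ} ‖m^(k) − m^(ℓ)‖ > 0. For each k let V_k := {z ∈ ℝ^D : ‖z − m^(k)‖ ≤ ‖z − m^(ℓ)‖ for all ℓ} be the Voronoi cell of m^(k). Fix ε ∈ (0,1) with ε/D < 1/2, and let Z be a random vector in ℝ^D whose coordinates are independent with Z_i ∼ N(m^(k)_i, σ²) for some σ > 0 (i.e. Z has law the product Gaussian with mean m^(k) and covariance σ²I_D). If σ ≤ δ / (2 Φ⁻¹(1 − ε/D)), then P(Z ∉ V_k) ≤ ε. -/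

import Mathlib

open MeasureTheory ProbabilityTheory
open scoped NNReal

/-- The cumulative distribution function Φ of the standard normal distribution. -/
noncomputable def stdNormalCDF (x : ℝ) : ℝ :=
  ((gaussianReal 0 1) (Set.Iic x)).toReal

/-- The quantile function Φ⁻¹ of the standard normal distribution (inverse of Φ). -/
noncomputable def stdNormalQuantile : ℝ → ℝ :=
  Function.invFun stdNormalCDF

/-- The product Gaussian measure on `EuclideanSpace ℝ (Fin D)` with mean `m` and
covariance `v • I_D`: the product measure whose `i`-th factor is `N(m i, v)`. -/
noncomputable def gaussianPi {D : ℕ} (m : EuclideanSpace ℝ (Fin D)) (v : ℝ≥0) :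
    Measure (EuclideanSpace ℝ (Fin D)) :=
  (Measure.pi fun i => gaussianReal (m i) v).map
    (MeasurableEquiv.toLp 2 (Fin D → ℝ))

open Real
open scoped ENNReal

lemma myQuadDecomp (a1 a2 m1 m2 t x : ℝ) (h1 : 0 < a1) (h2 : 0 < a2) :
    (x - m1)^2 / (2*a1) + (t - x - m2)^2 / (2*a2)
      = (a1+a2)/(2*a1*a2) * (x - (a2*m1 + a1*(t - m2))/(a1+a2))^2
        + (t - (m1+m2))^2 / (2*(a1+a2)) := by
  have h1' : a1 ≠ 0 := h1.ne'
  have h2' : a2 ≠ 0 := h2.ne'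
  have h12 : a1 + a2 ≠ 0 := by positivity
  field_simp
  ring

lemma myGaussShift (k b : ℝ) :
    ∫ x : ℝ, rexp (-(k * (x - b)^2)) = Real.sqrt (π / k) := by
  have := MeasureTheory.integral_sub_right_eq_self (μ := (volume : Measure ℝ))
    (fun x => rexp (-(k * x^2))) b
  rw [this]
  simpa [neg_mul] using integral_gaussian k

lemma myPDFconv (m1 m2 : ℝ) (v1 v2 : ℝ≥0) (h1 : v1 ≠ 0) (h2 : v2 ≠ 0) (t : ℝ) :
    ∫ x, gaussianPDFReal m1 v1 x * gaussianPDFReal m2 v2 (t - x)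
      = gaussianPDFReal (m1 + m2) (v1 + v2) t := by
  have h1p : (0:ℝ) < v1 := by positivity
  have h2p : (0:ℝ) < v2 := by positivity
  set a1 : ℝ := (v1 : ℝ)
  set a2 : ℝ := (v2 : ℝ)
  set s : ℝ := a1 + a2 with hs
  have hsp : 0 < s := by positivity
  set kk : ℝ := s / (2*a1*a2) with hkk
  have hkp : 0 < kk := by positivity
  set b : ℝ := (a2*m1 + a1*(t - m2))/s with hb
  set c : ℝ := (t - (m1+m2))^2 / (2*s) with hc
  have key : ∀ x, gaussianPDFReal m1 v1 x * gaussianPDFReal m2 v2 (t - x)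
      = ((√(2*π*a1))⁻¹ * (√(2*π*a2))⁻¹ * rexp (-c)) * rexp (-(kk * (x - b)^2)) := by
    intro x
    simp only [gaussianPDFReal]
    rw [show (√(2*π*a1))⁻¹ * rexp (-(x - m1)^2/(2*a1)) * ((√(2*π*a2))⁻¹ * rexp (-(t - x - m2)^2/(2*a2)))
        = (√(2*π*a1))⁻¹ * (√(2*π*a2))⁻¹ * (rexp (-(x - m1)^2/(2*a1)) * rexp (-(t - x - m2)^2/(2*a2))) by ring]
    rw [← Real.exp_add, show ((√(2*π*a1))⁻¹ * (√(2*π*a2))⁻¹ * rexp (-c)) * rexp (-(kk * (x - b)^2))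
        = (√(2*π*a1))⁻¹ * (√(2*π*a2))⁻¹ * (rexp (-c) * rexp (-(kk * (x - b)^2))) by ring, ← Real.exp_add]
    have := myQuadDecomp a1 a2 m1 m2 t x h1p h2p
    rw [← hs, ← hkk, ← hb, ← hc] at this
    rw [show (-(x - m1)^2/(2*a1) + -(t - x - m2)^2/(2*a2)) = (-c + -(kk * (x - b)^2)) from by linear_combination (-1 : ℝ) * this]
  rw [funext key, integral_const_mul, myGaussShift]
  have hconst : (√(2*π*a1))⁻¹ * (√(2*π*a2))⁻¹ * rexp (-c) * √(π / kk)
      = (√(2*π*s))⁻¹ * rexp (-c) := by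
    rw [show (√(2*π*a1))⁻¹ * (√(2*π*a2))⁻¹ * rexp (-c) * √(π / kk)
        = ((√(2*π*a1))⁻¹ * (√(2*π*a2))⁻¹ * √(π / kk)) * rexp (-c) by ring]
    congr 1
    rw [← Real.sqrt_inv, ← Real.sqrt_inv, ← Real.sqrt_inv,
      ← Real.sqrt_mul (by positivity), ← Real.sqrt_mul (by positivity)]
    congr 1
    rw [hkk]
    have hpi := Real.pi_pos
    field_simp
  rw [hconst, gaussianPDFReal]
  have hcoe : ((v1 + v2 : ℝ≥0) : ℝ) = s := by push_cast; rfl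
  rw [hcoe, hc]
  ring_nf

lemma myPDFbound (m : ℝ) (v : ℝ≥0) (x : ℝ) : ‖gaussianPDFReal m v x‖ ≤ (√(2*π*v))⁻¹ := by
  rw [Real.norm_of_nonneg (gaussianPDFReal_nonneg m v x), gaussianPDFReal]
  have : rexp (-(x - m)^2 / (2*v)) ≤ 1 := by
    apply Real.exp_le_one_iff.mpr
    apply div_nonpos_of_nonpos_of_nonneg (neg_nonpos.mpr (sq_nonneg _)) (by positivity)
  calc (√(2*π*v))⁻¹ * rexp (-(x - m)^2 / (2*v)) ≤ (√(2*π*v))⁻¹ * 1 := by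
        gcongr
    _ = (√(2*π*v))⁻¹ := mul_one _
  
lemma myPDFconvInt (m1 m2 : ℝ) (v1 v2 : ℝ≥0) (t : ℝ) :
    Integrable (fun x => gaussianPDFReal m1 v1 x * gaussianPDFReal m2 v2 (t - x)) := by
  have h := (integrable_gaussianPDFReal m1 v1).bdd_mul
    (f := fun x => gaussianPDFReal m2 v2 (t - x))
    (((measurable_gaussianPDFReal m2 v2).comp (measurable_const.sub measurable_id)).aestronglyMeasurable)
    (Filter.Eventually.of_forall fun x => myPDFbound m2 v2 (t - x))
  simpa [mul_comm] using h

lemma myPDFconvLint (m1 m2 : ℝ) (v1 v2 : ℝ≥0) (h1 : v1 ≠ 0) (h2 : v2 ≠ 0) (t : ℝ) :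
    ∫⁻ x, gaussianPDF m1 v1 x * gaussianPDF m2 v2 (t - x)
      = gaussianPDF (m1 + m2) (v1 + v2) t := by
  simp only [gaussianPDF]
  simp_rw [← ENNReal.ofReal_mul (gaussianPDFReal_nonneg m1 v1 _)]
  rw [← myPDFconv m1 m2 v1 v2 h1 h2 t,
    ← MeasureTheory.ofReal_integral_eq_lintegral_ofReal (myPDFconvInt m1 m2 v1 v2 t)
      (Filter.Eventually.of_forall fun x =>
        mul_nonneg (gaussianPDFReal_nonneg _ _ _) (gaussianPDFReal_nonneg _ _ _))]

lemma myGaussConv (m1 m2 : ℝ) (v1 v2 : ℝ≥0) :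
    ((gaussianReal m1 v1).prod (gaussianReal m2 v2)).map (fun p : ℝ × ℝ => p.1 + p.2)
      = gaussianReal (m1 + m2) (v1 + v2) := by
  by_cases h1 : v1 = 0
  · subst h1
    rw [gaussianReal_zero_var, Measure.dirac_prod, Measure.map_map (by fun_prop) (by fun_prop)]
    have he : ((fun p : ℝ × ℝ => p.1 + p.2) ∘ Prod.mk m1) = (fun y => m1 + y) := rfl
    rw [he, gaussianReal_map_const_add m1, add_comm m2 m1, zero_add]
  by_cases h2 : v2 = 0
  · subst h2
    rw [gaussianReal_zero_var, Measure.prod_dirac, Measure.map_map (by fun_prop) (by fun_prop)]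
    have he : ((fun p : ℝ × ℝ => p.1 + p.2) ∘ (fun x => (x, m2))) = (fun x => x + m2) := rfl
    rw [he, gaussianReal_map_add_const m2, add_zero]
  have h12 : v1 + v2 ≠ 0 := fun h => h1 (by simpa using (add_eq_zero.mp h).1)
  ext s hs
  set f := gaussianPDF m1 v1
  set g := gaussianPDF m2 v2
  set I := s.indicator (fun _ => (1:ℝ≥0∞)) with hI
  have hsA : MeasurableSet ((fun p : ℝ × ℝ => p.1 + p.2) ⁻¹' s) :=
    (measurable_fst.add measurable_snd) hs
  rw [Measure.map_apply (by fun_prop : Measurable (fun p : ℝ × ℝ => p.1 + p.2)) hs,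
    gaussianReal_of_var_ne_zero m1 h1, gaussianReal_of_var_ne_zero m2 h2,
    gaussianReal_of_var_ne_zero (m1+m2) h12,
    Measure.prod_apply hsA,
    lintegral_withDensity_eq_lintegral_mul volume (measurable_gaussianPDF m1 v1)
      (measurable_measure_prodMk_left hsA)]
  have hImeas : Measurable I := measurable_one.indicator hs
  have hIle : ∀ t, I t ≤ 1 := fun t => by
    by_cases h : t ∈ s <;> simp [hI, Set.indicator, h]
  have inner_eq : ∀ x : ℝ,
      (volume.withDensity g) (Prod.mk x ⁻¹' ((fun p : ℝ × ℝ => p.1 + p.2) ⁻¹' s))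
        = ∫⁻ t, I t * g (t - x) := by
    intro x
    have hB : MeasurableSet {y : ℝ | x + y ∈ s} := (measurable_const.add measurable_id) hs
    have h0 : Prod.mk x ⁻¹' ((fun p : ℝ × ℝ => p.1 + p.2) ⁻¹' s) = {y : ℝ | x + y ∈ s} := rfl
    rw [h0, withDensity_apply _ hB, ← lintegral_indicator hB]
    have h1' : ∀ y : ℝ, ({y : ℝ | x + y ∈ s}).indicator g y = I (x + y) * g y := by
      intro y
      by_cases h : x + y ∈ s <;> simp [hI, Set.indicator, h]
    calc ∫⁻ y, ({y : ℝ | x + y ∈ s}).indicator g y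
        = ∫⁻ y, I (x + y) * g (x + y - x) := by
          simp_rw [add_sub_cancel_left]; exact lintegral_congr h1'
      _ = ∫⁻ t, I t * g (t - x) :=
          lintegral_add_left_eq_self (fun t => I t * g (t - x)) x
  change ∫⁻ a, f a * (volume.withDensity g) (Prod.mk a ⁻¹' ((fun p : ℝ × ℝ => p.1 + p.2) ⁻¹' s)) = _
  simp_rw [inner_eq]
  have hfin : ∀ x, f x ≠ ∞ := fun x => ENNReal.ofReal_ne_top
  have hIfin : ∀ t, I t ≠ ∞ := fun t => (lt_of_le_of_lt (hIle t) ENNReal.one_lt_top).ne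
  calc ∫⁻ x, f x * ∫⁻ t, I t * g (t - x)
      = ∫⁻ x, ∫⁻ t, f x * (I t * g (t - x)) := by
        refine lintegral_congr fun x => ?_
        rw [lintegral_const_mul' _ _ (hfin x)]
    _ = ∫⁻ t, ∫⁻ x, f x * (I t * g (t - x)) := by
        apply lintegral_lintegral_swap
        apply Measurable.aemeasurable
        have hf : Measurable f := measurable_gaussianPDF m1 v1
        have hg : Measurable g := measurable_gaussianPDF m2 v2
        exact (hf.comp measurable_fst).mul
          ((hImeas.comp measurable_snd).mul (hg.comp (measurable_snd.sub measurable_fst)))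
    _ = ∫⁻ t, I t * ∫⁻ x, f x * g (t - x) := by
        refine lintegral_congr fun t => ?_
        rw [← lintegral_const_mul' _ _ (hIfin t)]
        exact lintegral_congr fun x => by ring
    _ = ∫⁻ t, I t * gaussianPDF (m1+m2) (v1+v2) t := by
        refine lintegral_congr fun t => ?_
        rw [myPDFconvLint m1 m2 v1 v2 h1 h2 t]
    _ = (volume.withDensity (gaussianPDF (m1+m2) (v1+v2))) s := by
        rw [withDensity_apply _ hs, ← lintegral_indicator hs]
        refine lintegral_congr fun t => ?_
        by_cases h : t ∈ s <;> simp [hI, Set.indicator, h]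

lemma myGaussPiMap (n : ℕ) (m : Fin n → ℝ) (v : Fin n → ℝ≥0) (c : Fin n → ℝ) :
    (Measure.pi fun i => gaussianReal (m i) (v i)).map (fun x => ∑ i, c i * x i)
      = gaussianReal (∑ i, c i * m i) (∑ i, ((c i)^2).toNNReal * v i) := by
  induction n with
  | zero =>
      simp only [Finset.univ_eq_empty, Finset.sum_empty]
      rw [Measure.map_const, measure_univ, one_smul, gaussianReal_zero_var]
  | succ n ih =>
      have hMP := measurePreserving_piFinSuccAbove
        (fun i : Fin (n+1) => gaussianReal (m i) (v i)) 0
      set μtail := Measure.pi fun j : Fin n => gaussianReal (m j.succ) (v j.succ) with hμtail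
      have htail : (Measure.pi fun j : Fin n =>
          gaussianReal (m ((0:Fin (n+1)).succAbove j)) (v ((0:Fin (n+1)).succAbove j))) = μtail := by
        simp [Fin.succAbove_zero, hμtail]
      set e := MeasurableEquiv.piFinSuccAbove (fun _ : Fin (n+1) => ℝ) 0 with he
      rw [htail] at hMP
      have hpi : (Measure.pi fun i : Fin (n+1) => gaussianReal (m i) (v i))
          = ((gaussianReal (m 0) (v 0)).prod μtail).map e.symm := ((hMP.symm e).map_eq).symm
      calc (Measure.pi fun i : Fin (n+1) => gaussianReal (m i) (v i)).map
            (fun x => ∑ i, c i * x i)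
          = (((gaussianReal (m 0) (v 0)).prod μtail).map e.symm).map
              (fun x => ∑ i, c i * x i) := by rw [hpi]
        _ = ((gaussianReal (m 0) (v 0)).prod μtail).map
              ((fun x : Fin (n+1) → ℝ => ∑ i, c i * x i) ∘ e.symm) :=
            Measure.map_map (by fun_prop) e.symm.measurable
        _ = ((gaussianReal (m 0) (v 0)).prod μtail).map
              ((fun p : ℝ × ℝ => p.1 + p.2) ∘
                Prod.map (fun x => c 0 * x) (fun y : Fin n → ℝ => ∑ j, c j.succ * y j)) := by
            congr 1
            ext p
            simp [he, MeasurableEquiv.piFinSuccAbove, Fin.insertNthEquiv, Fin.sum_univ_succ,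
              Fin.insertNth_zero]
        _ = (((gaussianReal (m 0) (v 0)).map (fun x => c 0 * x)).prod
              (μtail.map (fun y : Fin n → ℝ => ∑ j, c j.succ * y j))).map
              (fun p : ℝ × ℝ => p.1 + p.2) := by
            rw [← Measure.map_map (f := Prod.map (fun x => c 0 * x)
                (fun y : Fin n → ℝ => ∑ j, c j.succ * y j))
                (g := fun p : ℝ × ℝ => p.1 + p.2) (by fun_prop) (by fun_prop),
              Measure.map_prod_map _ _ (by fun_prop) (by fun_prop)]
        _ = gaussianReal (∑ i, c i * m i) (∑ i, ((c i)^2).toNNReal * v i) := by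
            rw [show (fun x : ℝ => c 0 * x) = (c 0 * ·) from rfl, gaussianReal_map_const_mul,
              ih, myGaussConv, Fin.sum_univ_succ (f := fun i => c i * m i),
              Fin.sum_univ_succ (f := fun i => ((c i)^2).toNNReal * v i)]
            congr 1
            rw [← NNReal.coe_inj]
            push_cast
            rw [Real.coe_toNNReal _ (sq_nonneg _)]

lemma myG01singleton (a : ℝ) : gaussianReal 0 1 {a} = 0 :=
  gaussianReal_absolutelyContinuous 0 one_ne_zero (Real.volume_singleton)

lemma myPhiIntegral (a b : ℝ) (hab : a ≤ b) :
    stdNormalCDF b = stdNormalCDF a + ∫ t in Set.Ioc a b, gaussianPDFReal 0 1 t := by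
  have h1 : gaussianReal 0 1 (Set.Iic b)
      = gaussianReal 0 1 (Set.Iic a) + gaussianReal 0 1 (Set.Ioc a b) := by
    rw [← measure_union (Set.Iic_disjoint_Ioc le_rfl) measurableSet_Ioc,
      Set.Iic_union_Ioc_eq_Iic hab]
  rw [stdNormalCDF, stdNormalCDF, h1,
    ENNReal.toReal_add (measure_ne_top _ _) (measure_ne_top _ _)]
  congr 1
  rw [gaussianReal_apply_eq_integral 0 one_ne_zero,
    ENNReal.toReal_ofReal (setIntegral_nonneg measurableSet_Ioc
      fun t _ => gaussianPDFReal_nonneg 0 1 t)]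

lemma myPhiCont : Continuous stdNormalCDF := by
  have h : stdNormalCDF = fun x => stdNormalCDF 0 + ∫ t in (0:ℝ)..x, gaussianPDFReal 0 1 t := by
    ext x
    rcases le_total 0 x with hx | hx
    · rw [intervalIntegral.integral_of_le hx, myPhiIntegral 0 x hx]
    · rw [intervalIntegral.integral_of_ge hx, myPhiIntegral x 0 hx]; ring
  rw [h]
  exact continuous_const.add ((integrable_gaussianPDFReal 0 1).continuous_primitive 0)

lemma myPhiMono : Monotone stdNormalCDF := fun a b hab =>
  ENNReal.toReal_mono (measure_ne_top _ _) (measure_mono (Set.Iic_subset_Iic.mpr hab))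

lemma myPhiZero : stdNormalCDF 0 = 1/2 := by
  have hmap : (gaussianReal 0 1).map (fun x : ℝ => (-1:ℝ) * x) = gaussianReal 0 1 := by
    rw [show (fun x : ℝ => (-1:ℝ) * x) = ((-1:ℝ) * ·) from rfl, gaussianReal_map_const_mul (-1)]
    congr 1
    · ring
    · rw [← NNReal.coe_inj]; norm_num
  have h1 : gaussianReal 0 1 (Set.Iic 0) = gaussianReal 0 1 (Set.Ici 0) := by
    conv_lhs => rw [← hmap]
    rw [Measure.map_apply (by fun_prop) measurableSet_Iic]
    congr 1
    ext x
    simp [neg_nonpos]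
  have h2 : gaussianReal 0 1 (Set.Iic 0) + gaussianReal 0 1 (Set.Ici 0)
      = 1 + gaussianReal 0 1 ({0} : Set ℝ) := by
    rw [← measure_union_add_inter _ measurableSet_Ici, Set.Iic_union_Ici, measure_univ,
      Set.Iic_inter_Ici, Set.Icc_self]
  rw [myG01singleton, add_zero, h1] at h2
  have h3 := congrArg ENNReal.toReal h2
  rw [ENNReal.toReal_add (measure_ne_top _ _) (measure_ne_top _ _), ENNReal.toReal_one] at h3
  have h4 : stdNormalCDF 0 = (gaussianReal 0 1 (Set.Ici 0)).toReal := by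
    rw [stdNormalCDF, h1]
  rw [h4]
  linarith
lemma myPhiTop : Filter.Tendsto stdNormalCDF Filter.atTop (nhds 1) := by
  have h := tendsto_measure_Iic_atTop (gaussianReal 0 1)
  rw [measure_univ] at h
  have h2 := (ENNReal.tendsto_toReal (by norm_num : (1:ℝ≥0∞) ≠ ⊤)).comp h
  exact h2

lemma myQuantileSpec (p : ℝ) (hp1 : 1/2 < p) (hp2 : p < 1) :
    stdNormalCDF (stdNormalQuantile p) = p ∧ 0 < stdNormalQuantile p := by
  obtain ⟨b, hb⟩ : ∃ b, p < stdNormalCDF b :=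
    (myPhiTop.eventually (eventually_gt_nhds hp2)).exists
  have hb0 : (0:ℝ) ≤ b := by
    by_contra h
    push_neg at h
    have := myPhiMono h.le
    rw [myPhiZero] at this
    linarith
  have hex : ∃ x, stdNormalCDF x = p := by
    have h0 : stdNormalCDF 0 ≤ p := by rw [myPhiZero]; linarith
    obtain ⟨x, _, hx⟩ := intermediate_value_Icc hb0 myPhiCont.continuousOn ⟨h0, hb.le⟩
    exact ⟨x, hx⟩
  have hΦq : stdNormalCDF (stdNormalQuantile p) = p := Function.invFun_eq hex
  refine ⟨hΦq, ?_⟩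
  by_contra h
  push_neg at h
  have := myPhiMono h
  rw [hΦq, myPhiZero] at this
  linarith

lemma myTail (y : ℝ) : gaussianReal 0 1 (Set.Ici y) = ENNReal.ofReal (1 - stdNormalCDF y) := by
  have h1 : gaussianReal 0 1 (Set.Iio y) = gaussianReal 0 1 (Set.Iic y) :=
    measure_congr (Iio_ae_eq_Iic' (myG01singleton y))
  have h2 : gaussianReal 0 1 (Set.Ici y) = 1 - gaussianReal 0 1 (Set.Iic y) := by
    rw [← Set.compl_Iio, measure_compl measurableSet_Iio (measure_ne_top _ _), measure_univ, h1]
  rw [h2, stdNormalCDF, ENNReal.ofReal_sub _ ENNReal.toReal_nonneg, ENNReal.ofReal_one,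
    ENNReal.ofReal_toReal (measure_ne_top _ _)]

lemma myGaussIci (μ0 : ℝ) (v0 : ℝ≥0) (hv : v0 ≠ 0) (C : ℝ) :
    gaussianReal μ0 v0 (Set.Ici C)
      = gaussianReal 0 1 (Set.Ici ((C - μ0) / Real.sqrt v0)) := by
  have hvpos : (0:ℝ) < v0 := lt_of_le_of_ne v0.coe_nonneg (by simpa using (NNReal.coe_ne_zero.mpr hv).symm)
  have hs : (0:ℝ) < Real.sqrt v0 := Real.sqrt_pos.mpr hvpos
  have hmap : (gaussianReal 0 1).map (fun x => Real.sqrt v0 * x + μ0) = gaussianReal μ0 v0 := by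
    have h1 : (gaussianReal (0:ℝ) 1).map ((Real.sqrt v0) * ·)
        = gaussianReal 0 v0 := by
      rw [gaussianReal_map_const_mul]
      congr 1
      · ring
      · rw [← NNReal.coe_inj]
        push_cast
        rw [Real.sq_sqrt hvpos.le, mul_one]
    have h2 : (fun x => Real.sqrt v0 * x + μ0) = (· + μ0) ∘ ((Real.sqrt v0) * ·) := rfl
    rw [h2, ← Measure.map_map (by fun_prop) (by fun_prop), h1, gaussianReal_map_add_const,
      zero_add]
  rw [← hmap, Measure.map_apply (by fun_prop) measurableSet_Ici]
  congr 1
  ext x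
  simp only [Set.mem_preimage, Set.mem_Ici]
  rw [div_le_iff₀ hs]
  constructor <;> intro h <;> nlinarith

/-- If `σ ≤ δ / (2 Φ⁻¹(1 - ε/D))`, then `P(Z ∉ V_k) ≤ ε` for `Z ∼ N(m k, σ² I_D)`. -/
theorem gaussian_notMem_voronoi_le_of_sigma_le
    (K D : ℕ) (hK : 2 ≤ K) (hD : D = K - 1)
    (m : Fin K → EuclideanSpace ℝ (Fin D)) (δ : ℝ)
    (hδ : IsLeast {d : ℝ | ∃ k l : Fin K, k ≠ l ∧ d = dist (m k) (m l)} δ)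
    (hδpos : 0 < δ)
    (ε : ℝ) (hε : ε ∈ Set.Ioo (0 : ℝ) 1) (hεD : ε / (D : ℝ) < 1 / 2)
    (σ : ℝ) (hσ : 0 < σ)
    (hσle : σ ≤ δ / (2 * stdNormalQuantile (1 - ε / (D : ℝ))))
    (k : Fin K) :
    gaussianPi (m k) ((σ ^ 2).toNNReal)
        {z : EuclideanSpace ℝ (Fin D) |
          z ∉ {z : EuclideanSpace ℝ (Fin D) | ∀ l : Fin K, dist z (m k) ≤ dist z (m l)}}
      ≤ ENNReal.ofReal ε := by
  have hDpos : 0 < D := by omega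
  have hDR : (0:ℝ) < D := by exact_mod_cast hDpos
  set V : ℝ≥0 := (σ^2).toNNReal with hV
  set p : ℝ := 1 - ε / (D:ℝ) with hp
  have hp1 : 1/2 < p := by rw [hp]; linarith
  have hp2 : p < 1 := by
    have : 0 < ε / (D:ℝ) := div_pos hε.1 hDR
    rw [hp]; linarith
  obtain ⟨hΦq, hqpos⟩ := myQuantileSpec p hp1 hp2
  set q := stdNormalQuantile p with hqdef
  have hqle : q ≤ δ / (2 * σ) := by
    rw [le_div_iff₀ (by linarith : (0:ℝ) < 2 * q)] at hσle
    rw [le_div_iff₀ (by positivity : (0:ℝ) < 2 * σ)]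
    nlinarith
  have key : ∀ l : Fin K, l ≠ k →
      gaussianPi (m k) V {z : EuclideanSpace ℝ (Fin D) | dist z (m l) < dist z (m k)}
        ≤ ENNReal.ofReal (ε / (D:ℝ)) := by
    intro l hl
    set u : EuclideanSpace ℝ (Fin D) := m l - m k with hu
    have hdδ : δ ≤ dist (m k) (m l) := hδ.2 ⟨k, l, hl.symm, rfl⟩
    have hd : ‖u‖ = dist (m l) (m k) := (dist_eq_norm _ _).symm
    have hdge : δ ≤ ‖u‖ := by rw [hd, dist_comm]; exact hdδ
    have hdpos : 0 < ‖u‖ := lt_of_lt_of_le hδpos hdge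
    set c : Fin D → ℝ := fun i => u i with hc
    set C : ℝ := ‖u‖^2/2 + ∑ i, c i * (m k) i with hC
    have hsubset : {z : EuclideanSpace ℝ (Fin D) | dist z (m l) < dist z (m k)}
        ⊆ {z : EuclideanSpace ℝ (Fin D) | C ≤ ∑ i, c i * z i} := by
      intro z hz
      simp only [Set.mem_setOf_eq] at hz ⊢
      have h1 : ‖z - m l‖ < ‖z - m k‖ := by
        rwa [← dist_eq_norm, ← dist_eq_norm]
      have h2 : ‖z - m l‖^2 < ‖z - m k‖^2 := by
        nlinarith [norm_nonneg (z - m l), norm_nonneg (z - m k)]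
      have h3 : z - m l = (z - m k) - u := by rw [hu, sub_sub_sub_cancel_right]
      have h4 : ‖(z - m k) - u‖^2
          = ‖z - m k‖^2 - 2 * (inner ℝ (z - m k) u : ℝ) + ‖u‖^2 := norm_sub_sq_real _ _
      rw [h3, h4] at h2
      have h5 : ‖u‖^2 / 2 ≤ (inner ℝ (z - m k) u : ℝ) := by linarith
      have h6 : (inner ℝ (z - m k) u : ℝ) = ∑ i, c i * z i - ∑ i, c i * (m k) i := by
        rw [PiLp.inner_apply, ← Finset.sum_sub_distrib]
        congr 1
        ext i
        simp only [RCLike.inner_apply, conj_trivial, hc]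
        have : (z - m k) i = z i - (m k) i := rfl
        rw [this]
        ring
      rw [hC]
      linarith
    refine le_trans (measure_mono hsubset) ?_
    have hSm : Measurable (fun x : Fin D → ℝ => ∑ i, c i * x i) := by fun_prop
    have hcomp : (fun x : Fin D → ℝ => ∑ i, c i * x i) ∘
        (MeasurableEquiv.toLp 2 (Fin D → ℝ)).symm
        = fun z : EuclideanSpace ℝ (Fin D) => ∑ i, c i * z i := rfl
    have hmeasE : Measurable (fun z : EuclideanSpace ℝ (Fin D) => ∑ i, c i * z i) := by
      rw [← hcomp]
      exact hSm.comp (MeasurableEquiv.toLp 2 (Fin D → ℝ)).symm.measurable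
    have hset : MeasurableSet {z : EuclideanSpace ℝ (Fin D) | C ≤ ∑ i, c i * z i} :=
      hmeasE measurableSet_Ici
    rw [gaussianPi, Measure.map_apply (MeasurableEquiv.measurable _) hset]
    have hpre : (MeasurableEquiv.toLp 2 (Fin D → ℝ)) ⁻¹'
        {z : EuclideanSpace ℝ (Fin D) | C ≤ ∑ i, c i * z i}
        = (fun x : Fin D → ℝ => ∑ i, c i * x i) ⁻¹' (Set.Ici C) := rfl
    rw [hpre, ← Measure.map_apply hSm measurableSet_Ici, myGaussPiMap]
    have hnormsq : ‖u‖^2 = ∑ i, (c i)^2 := by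
      rw [EuclideanSpace.norm_eq, Real.sq_sqrt (Finset.sum_nonneg fun i _ => sq_nonneg _)]
      simp [hc]
    have hVlcoe : ((∑ i, ((c i)^2).toNNReal * V : ℝ≥0) : ℝ) = ‖u‖^2 * σ^2 := by
      rw [NNReal.coe_sum, hnormsq, Finset.sum_mul]
      refine Finset.sum_congr rfl fun i _ => ?_
      rw [NNReal.coe_mul, Real.coe_toNNReal _ (sq_nonneg (c i)), hV,
        Real.coe_toNNReal _ (sq_nonneg σ)]
    have hVlne : (∑ i, ((c i)^2).toNNReal * V : ℝ≥0) ≠ 0 := by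
      intro h
      have := hVlcoe
      rw [h] at this
      simp only [NNReal.coe_zero] at this
      nlinarith [mul_pos (pow_pos hdpos 2) (pow_pos hσ 2)]
    rw [myGaussIci _ _ hVlne]
    have hsqrt : Real.sqrt ((∑ i, ((c i)^2).toNNReal * V : ℝ≥0) : ℝ) = ‖u‖ * σ := by
      rw [hVlcoe, show ‖u‖^2 * σ^2 = (‖u‖ * σ)^2 by ring, Real.sqrt_sq (by positivity)]
    have harg : (C - ∑ i, c i * (m k) i) / Real.sqrt ((∑ i, ((c i)^2).toNNReal * V : ℝ≥0) : ℝ)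
        = ‖u‖ / (2 * σ) := by
      rw [hsqrt, hC]
      have h1 : ‖u‖^2/2 + ∑ i, c i * (m k) i - ∑ i, c i * (m k) i = ‖u‖^2/2 := by ring
      rw [h1]
      field_simp
    rw [harg]
    have hq2 : q ≤ ‖u‖ / (2 * σ) := by
      refine le_trans hqle ?_
      gcongr
    refine le_trans (measure_mono (Set.Ici_subset_Ici.mpr hq2)) ?_
    rw [myTail, hΦq, hp]
    exact le_of_eq (by ring_nf)
  have hsub : {z : EuclideanSpace ℝ (Fin D) |
        z ∉ {z : EuclideanSpace ℝ (Fin D) | ∀ l : Fin K, dist z (m k) ≤ dist z (m l)}}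
      ⊆ ⋃ l ∈ Finset.univ.erase k,
          {z : EuclideanSpace ℝ (Fin D) | dist z (m l) < dist z (m k)} := by
    intro z hz
    simp only [Set.mem_setOf_eq, not_forall, not_le] at hz
    obtain ⟨l, hl⟩ := hz
    have hlk : l ≠ k := by rintro rfl; exact lt_irrefl _ hl
    exact Set.mem_biUnion (Finset.mem_erase.mpr ⟨hlk, Finset.mem_univ l⟩) hl
  refine le_trans (measure_mono hsub) (le_trans (measure_biUnion_finset_le _ _) ?_)
  refine le_trans (Finset.sum_le_sum fun l hl => key l (Finset.mem_erase.mp hl).1) ?_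
  rw [Finset.sum_const, Finset.card_erase_of_mem (Finset.mem_univ k), Finset.card_univ,
    Fintype.card_fin, ← hD, nsmul_eq_mul, ← ENNReal.ofReal_natCast,
    ← ENNReal.ofReal_mul (by positivity)]
  rw [mul_div_cancel₀ _ (ne_of_gt hDR)]
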